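/- Let α, β ∈ ℂ with α ≠ 0 and β ≠ 0. The Poisson algebras P₃,₄^α and P₃,₄^β are isomorphic if and only if α = β or α = 1/β. -/

import Mathlib

open scoped BigOperators

/-- The bilinear map on `Fin n → ℂ` determined by structure constants `c`. -/
noncomputable def sb {n : ℕ} (c : Fin n → Fin n → Fin n → ℂ) :
    (Fin n → ℂ) →ₗ[ℂ] (Fin n → ℂ) →ₗ[ℂ] (Fin n → ℂ) :=
  LinearMap.mk₂ ℂ (fun x y k => ∑ a, ∑ b, c a b k * (x a * y b))
    (fun x x' y => by
      funext k
      simp [add_mul, mul_add, Finset.sum_add_distrib])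
    (fun r x y => by
      funext k
      simp only [Pi.smul_apply, smul_eq_mul, Finset.mul_sum]
      exact Finset.sum_congr rfl fun a _ => Finset.sum_congr rfl fun b _ => by ring)
    (fun x y y' => by
      funext k
      simp [mul_add, Finset.sum_add_distrib])
    (fun r x y => by
      funext k
      simp only [Pi.smul_apply, smul_eq_mul, Finset.mul_sum]
      exact Finset.sum_congr rfl fun a _ => Finset.sum_congr rfl fun b _ => by ring)

/-- Isomorphism of Poisson algebra structures on `Fin 3 → ℂ`. -/
def Iso33 (m b m' b' : (Fin 3 → ℂ) →ₗ[ℂ] (Fin 3 → ℂ) →ₗ[ℂ] (Fin 3 → ℂ)) : Prop :=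
  ∃ φ : (Fin 3 → ℂ) ≃ₗ[ℂ] (Fin 3 → ℂ),
    (∀ x y, φ (m x y) = m' (φ x) (φ y)) ∧ (∀ x y, φ (b x y) = b' (φ x) (φ y))

/-- Structure constants of the bracket of `P₃,₄^α`: {e₁,e₂}=e₂, {e₁,e₃}=α e₃. -/
def cb4 (α : ℂ) : Fin 3 → Fin 3 → Fin 3 → ℂ :=
  ![![![0,0,0],![0,1,0],![0,0,α]], ![![0,-1,0],![0,0,0],![0,0,0]], ![![0,0,-α],![0,0,0],![0,0,0]]]

lemma sbv (γ : ℂ) (x y : Fin 3 → ℂ) :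
    sb (cb4 γ) x y = ![0, x 0 * y 1 - x 1 * y 0, γ * (x 0 * y 2) - γ * (x 2 * y 0)] := by
  funext k
  fin_cases k <;> simp [sb, cb4, Fin.sum_univ_three, Matrix.vecHead, Matrix.vecTail] <;> ring

/-- For nonzero α, β : `P₃,₄^α ≅ P₃,₄^β` iff `α = β` or `α = 1/β`. -/
theorem stmt2 (α β : ℂ) (hα : α ≠ 0) (hβ : β ≠ 0) :
    Iso33 0 (sb (cb4 α)) 0 (sb (cb4 β)) ↔ (α = β ∨ α = 1 / β) := by
  constructor
  · rintro ⟨φ, -, hb⟩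
    -- images of basis vectors
    set P : Fin 3 → ℂ := φ ![1,0,0] with hP
    set Q : Fin 3 → ℂ := φ ![0,1,0] with hQ
    set R : Fin 3 → ℂ := φ ![0,0,1] with hR
    have he12 : sb (cb4 α) ![1,0,0] ![0,1,0] = ![0,1,0] := by
      rw [sbv]; funext k; fin_cases k <;> norm_num <;> exact Or.inr rfl
    have he13 : sb (cb4 α) ![1,0,0] ![0,0,1] = α • ![0,0,1] := by
      rw [sbv]; funext k; fin_cases k <;> simp
    have E2 : Q = sb (cb4 β) P Q := by rw [hQ, ← hb, he12]
    have E3 : α • R = sb (cb4 β) P R := by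
      rw [hR, ← map_smul, ← he13, hb, ← hP]
    rw [sbv] at E2 E3
    have q0 : Q 0 = 0 := by simpa using congrFun E2 0
    have q1 : Q 1 = P 0 * Q 1 - P 1 * Q 0 := by simpa using congrFun E2 1
    have q2 : Q 2 = β * (P 0 * Q 2) - β * (P 2 * Q 0) := by simpa using congrFun E2 2
    have r0' : α * R 0 = 0 := by simpa using congrFun E3 0
    have r0 : R 0 = 0 := by
      rcases mul_eq_zero.1 r0' with h | h
      · exact absurd h hα
      · exact h
    have r1 : α * R 1 = P 0 * R 1 - P 1 * R 0 := by simpa using congrFun E3 1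
    have r2 : α * R 2 = β * (P 0 * R 2) - β * (P 2 * R 0) := by simpa using congrFun E3 2
    rw [q0] at q1 q2
    rw [r0] at r1 r2
    simp only [mul_zero, sub_zero] at q1 q2 r1 r2
    -- determinant nonvanishing
    have hdet : Q 1 * R 2 - Q 2 * R 1 ≠ 0 := by
      intro hd
      have h1 : φ (R 2 • ![0,1,0] - Q 2 • ![0,0,1]) = 0 := by
        rw [map_sub, map_smul, map_smul, ← hQ, ← hR]
        funext k
        fin_cases k <;>
          simp [q0, r0] <;>
          first
            | linear_combination hd
            | linear_combination -hd
            | ring1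
      have h2 : φ (R 1 • ![0,1,0] - Q 1 • ![0,0,1]) = 0 := by
        rw [map_sub, map_smul, map_smul, ← hQ, ← hR]
        funext k
        fin_cases k <;>
          simp [q0, r0] <;>
          first
            | linear_combination hd
            | linear_combination -hd
            | ring1
      have h1' := φ.map_eq_zero_iff.1 h1
      have h2' := φ.map_eq_zero_iff.1 h2
      have hQ1 : Q 1 = 0 := by have := congrFun h2' 2; simpa using this
      have hQ2 : Q 2 = 0 := by have := congrFun h1' 2; simpa using this
      have : φ ![0,1,0] = 0 := by
        rw [← hQ]
        funext k
        fin_cases k <;> simp [q0, hQ1, hQ2]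
      have := φ.map_eq_zero_iff.1 this
      simpa using congrFun this 1
    by_cases hQ1 : Q 1 = 0
    · -- α = 1/β case
      right
      have hQR : Q 2 ≠ 0 ∧ R 1 ≠ 0 := by
        constructor <;> intro h <;> apply hdet <;> rw [hQ1] <;> simp [h]
      have hb1 : β * P 0 = 1 := by
        rcases mul_eq_zero.1 (by linear_combination -q2 : (β * P 0 - 1) * Q 2 = 0) with h | h
        · linear_combination h
        · exact absurd h hQR.1
      have ha1 : α = P 0 := by
        rcases mul_eq_zero.1 (by linear_combination r1 : (α - P 0) * R 1 = 0) with h | h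
        · linear_combination h
        · exact absurd h hQR.2
      rw [ha1, eq_div_iff hβ]
      linear_combination hb1
    · -- P 0 = 1
      have hp1 : P 0 = 1 := by
        rcases mul_eq_zero.1 (by linear_combination -q1 : (P 0 - 1) * Q 1 = 0) with h | h
        · linear_combination h
        · exact absurd h hQ1
      by_cases hR2 : R 2 = 0
      · left
        have hQ2 : Q 2 ≠ 0 := by intro h; apply hdet; rw [hR2, h]; ring
        have hR1 : R 1 ≠ 0 := by intro h; apply hdet; rw [hR2, h]; ring
        have hb1 : β = 1 := by
          rcases mul_eq_zero.1 (by linear_combination -q2 : (β * P 0 - 1) * Q 2 = 0) with h | h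
          · rw [hp1, mul_one] at h; linear_combination h
          · exact absurd h hQ2
        have ha1 : α = 1 := by
          rcases mul_eq_zero.1 (by linear_combination r1 : (α - P 0) * R 1 = 0) with h | h
          · rw [hp1] at h; linear_combination h
          · exact absurd h hR1
        rw [ha1, hb1]
      · left
        rcases mul_eq_zero.1 (by linear_combination r2 : (α - β * P 0) * R 2 = 0) with h | h
        · rw [hp1, mul_one] at h; linear_combination h
        · exact absurd h hR2
  · rintro (rfl | h)
    · exact ⟨LinearEquiv.refl ℂ _, fun x y => by simp, fun x y => by simp⟩
    · have hab : α * β = 1 := by rw [h]; field_simp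
      refine ⟨{ toFun := fun x => ![α * x 0, x 2, x 1]
                map_add' := fun x y => by
                  funext k; fin_cases k <;> simp <;> ring
                map_smul' := fun r x => by
                  funext k; fin_cases k <;> simp <;> ring
                invFun := fun x => ![β * x 0, x 2, x 1]
                left_inv := fun x => by
                  funext k; fin_cases k <;> simp
                  linear_combination x 0 * hab
                right_inv := fun x => by
                  funext k; fin_cases k <;> simp
                  linear_combination x 0 * hab }, fun x y => by simp, fun x y => ?_⟩
      show ![α * (sb (cb4 α) x y) 0, (sb (cb4 α) x y) 2, (sb (cb4 α) x y) 1]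
          = sb (cb4 β) ![α * x 0, x 2, x 1] ![α * y 0, y 2, y 1]
      rw [sbv, sbv]
      funext k
      fin_cases k <;> simp
      · ring
      · linear_combination (x 1 * y 0 - x 0 * y 1) * hab
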